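/- Let C be an s×m matrix with non-negative rational entries and non-zero columns, let {I_n} be the filtration of Q(C), and let α̂(F) be its Waldschmidt constant. Then α_F(1) ≥ α̂(F), and if the polyhedron Q(C) has only integral vertices then α_F(1) = α̂(F). -/

import Mathlib

open MvPolynomial

noncomputable section

/-- Membership of a rational point in the covering polyhedron `Q(C) = {x : x ≥ 0, xC ≥ 1}`. -/
def memCP {s m : ℕ} (C : Matrix (Fin s) (Fin m) ℚ) (x : Fin s → ℚ) : Prop :=
  (∀ i, 0 ≤ x i) ∧ ∀ j, 1 ≤ ∑ i, x i * C i j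

/-- The covering polyhedron `Q(C) ⊆ ℝ^s` of the matrix `C`. -/
def CPset {s m : ℕ} (C : Matrix (Fin s) (Fin m) ℚ) : Set (Fin s → ℝ) :=
  {x | (∀ i, 0 ≤ x i) ∧ ∀ j, (1 : ℝ) ≤ ∑ i, x i * (C i j : ℝ)}

/-- The `n`-th ideal of the filtration associated to the covering polyhedron of `C`. -/
def filtIdeal (K : Type*) [Field K] {s m : ℕ} (C : Matrix (Fin s) (Fin m) ℚ) (n : ℕ) :
    Ideal (MvPolynomial (Fin s) K) :=
  if n = 0 then ⊤ else
    Ideal.span { f | ∃ a : Fin s →₀ ℕ,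
      f = monomial a 1 ∧ memCP C (fun i => (a i : ℚ) / n) }

/-- `α_F(n)`: the least degree of a monomial in `I_n`. -/
def alphaF (K : Type*) [Field K] {s m : ℕ} (C : Matrix (Fin s) (Fin m) ℚ) (n : ℕ) : ℕ :=
  sInf { d | ∃ a : Fin s →₀ ℕ,
    (monomial a 1 : MvPolynomial (Fin s) K) ∈ filtIdeal K C n ∧ d = ∑ i, a i }

/-- The Waldschmidt constant `α̂(F) = lim α_F(n)/n = inf α_F(n)/n`. -/
def waldschmidt (K : Type*) [Field K] {s m : ℕ} (C : Matrix (Fin s) (Fin m) ℚ) : ℝ :=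
  ⨅ n : ℕ+, (alphaF K C (n : ℕ) : ℝ) / (n : ℕ)


-- auxiliary lemmas

/-- The sum-of-coordinates continuous linear functional. -/
def degCLM (s : ℕ) : (Fin s → ℝ) →L[ℝ] ℝ := ∑ i : Fin s, ContinuousLinearMap.proj i

lemma degCLM_apply {s : ℕ} (x : Fin s → ℝ) : degCLM s x = ∑ i, x i := by
  simp [degCLM, ContinuousLinearMap.sum_apply]

lemma CPset_convex {s m : ℕ} (C : Matrix (Fin s) (Fin m) ℚ) : Convex ℝ (CPset C) := by
  rintro x ⟨hx0, hx1⟩ y ⟨hy0, hy1⟩ a b ha hb hab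
  refine ⟨fun i => add_nonneg (mul_nonneg ha (hx0 i)) (mul_nonneg hb (hy0 i)), fun j => ?_⟩
  have : ∑ i, (a * x i + b * y i) * (C i j : ℝ)
      = a * ∑ i, x i * (C i j : ℝ) + b * ∑ i, y i * (C i j : ℝ) := by
    rw [Finset.mul_sum, Finset.mul_sum, ← Finset.sum_add_distrib]
    congr 1; ext i; ring
  simp only [Pi.add_apply, Pi.smul_apply, smul_eq_mul]
  rw [this]
  calc (1:ℝ) = a * 1 + b * 1 := by rw [mul_one, mul_one, hab]
  _ ≤ a * ∑ i, x i * (C i j : ℝ) + b * ∑ i, y i * (C i j : ℝ) := by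
      gcongr <;> [exact hx1 j; exact hy1 j]

lemma CPset_closed {s m : ℕ} (C : Matrix (Fin s) (Fin m) ℚ) : IsClosed (CPset C) := by
  have : CPset C = (⋂ i, {x : Fin s → ℝ | 0 ≤ x i}) ∩
      ⋂ j, {x : Fin s → ℝ | (1:ℝ) ≤ ∑ i, x i * (C i j : ℝ)} := by
    ext x; simp [CPset, Set.mem_iInter]
  rw [this]
  refine IsClosed.inter (isClosed_iInter fun i => ?_) (isClosed_iInter fun j => ?_)
  · exact isClosed_le continuous_const (continuous_apply i)
  · exact isClosed_le continuous_const
      (continuous_finset_sum _ fun i _ => (continuous_apply i).mul continuous_const)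

lemma exists_bigN {s m : ℕ} (C : Matrix (Fin s) (Fin m) ℚ)
    (hC : ∀ i j, 0 ≤ C i j) (hcol : ∀ j, ∃ i, C i j ≠ 0) :
    ∃ N : ℕ, ∀ j, (1:ℚ) ≤ ∑ i, (N : ℚ) * C i j := by
  have hpos : ∀ j, 0 < ∑ i, C i j := fun j => by
    obtain ⟨i, hi⟩ := hcol j
    exact Finset.sum_pos' (fun i _ => hC i j) ⟨i, Finset.mem_univ i, lt_of_le_of_ne (hC i j) (Ne.symm hi)⟩
  have h : ∀ j, ∃ N : ℕ, (1:ℚ) ≤ N * ∑ i, C i j := by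
    intro j
    obtain ⟨N, hN⟩ := exists_nat_ge ((∑ i, C i j)⁻¹)
    have h1 : (1:ℚ) / (∑ i, C i j) ≤ N := by rw [one_div]; exact hN
    have := (div_le_iff₀ (hpos j)).mp h1
    exact ⟨N, by linarith⟩
  choose f hf using h
  refine ⟨Finset.univ.sup f, fun j => ?_⟩
  rw [← Finset.mul_sum]
  calc (1:ℚ) ≤ f j * ∑ i, C i j := hf j
  _ ≤ ((Finset.univ.sup f : ℕ) : ℚ) * ∑ i, C i j := by
      gcongr
      · exact (hpos j).le
      · exact_mod_cast Finset.le_sup (Finset.mem_univ j)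

lemma mem_filtIdeal_of_memCP (K : Type*) [Field K] {s m : ℕ} (C : Matrix (Fin s) (Fin m) ℚ)
    {n : ℕ} (hn : n ≠ 0) (a : Fin s →₀ ℕ) (ha : memCP C (fun i => (a i : ℚ) / n)) :
    (monomial a 1 : MvPolynomial (Fin s) K) ∈ filtIdeal K C n := by
  rw [filtIdeal, if_neg hn]
  exact Ideal.subset_span ⟨a, rfl, ha⟩

lemma exists_le_of_mem_filtIdeal (K : Type*) [Field K] {s m : ℕ}
    (C : Matrix (Fin s) (Fin m) ℚ) {n : ℕ} (hn : n ≠ 0) (a : Fin s →₀ ℕ)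
    (ha : (monomial a 1 : MvPolynomial (Fin s) K) ∈ filtIdeal K C n) :
    ∃ b : Fin s →₀ ℕ, b ≤ a ∧ memCP C (fun i => (b i : ℚ) / n) := by
  rw [filtIdeal, if_neg hn] at ha
  have hset : { f | ∃ a : Fin s →₀ ℕ, f = monomial a (1:K) ∧ memCP C (fun i => (a i : ℚ) / n) }
      = (fun a => monomial a (1:K)) '' {a | memCP C (fun i => (a i : ℚ) / n)} := by
    ext f; constructor
    · rintro ⟨a, rfl, h⟩; exact ⟨a, h, rfl⟩
    · rintro ⟨a, h, rfl⟩; exact ⟨a, rfl, h⟩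
  rw [hset, mem_ideal_span_monomial_image] at ha
  obtain ⟨b, hb, hba⟩ := ha a (by simp [support_monomial])
  exact ⟨b, hba, hb⟩

/-- `α_F(1) ≥ α̂(F)`, with equality if the covering polyhedron `Q(C)` is integral
(all its vertices are integral). -/
theorem stmt6 {K : Type*} [Field K] {s m : ℕ} (C : Matrix (Fin s) (Fin m) ℚ)
    (hC : ∀ i j, 0 ≤ C i j) (hcol : ∀ j, ∃ i, C i j ≠ 0) :
    waldschmidt K C ≤ (alphaF K C 1 : ℝ) ∧
      ((∀ v ∈ Set.extremePoints ℝ (CPset C), ∃ z : Fin s → ℤ, v = fun i => (z i : ℝ)) →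
        (alphaF K C 1 : ℝ) = waldschmidt K C) := by
  have hbdd : BddBelow (Set.range fun n : ℕ+ => (alphaF K C (n:ℕ) : ℝ) / (n:ℕ)) := by
    refine ⟨0, ?_⟩; rintro x ⟨n, rfl⟩; positivity
  have part1 : waldschmidt K C ≤ (alphaF K C 1 : ℝ) := by
    have := ciInf_le hbdd (1 : ℕ+)
    simpa [waldschmidt] using this
  refine ⟨part1, fun hint => ?_⟩
  -- the polyhedron
  obtain ⟨N, hN⟩ := exists_bigN C hC hcol
  set Q := CPset C with hQdef
  have hx₀ : (fun _ : Fin s => (N : ℝ)) ∈ Q := by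
    refine ⟨fun i => by positivity, fun j => ?_⟩
    show (1:ℝ) ≤ ∑ i, (N:ℝ) * (C i j : ℝ)
    exact_mod_cast hN j
  -- minimizers of deg over Q form a compact exposed face
  set l : (Fin s → ℝ) →L[ℝ] ℝ := -(degCLM s) with hl
  set F : Set (Fin s → ℝ) := l.toExposed Q with hF
  have hFmin : ∀ x ∈ F, x ∈ Q ∧ ∀ y ∈ Q, degCLM s x ≤ degCLM s y := by
    rintro x ⟨hxQ, hx⟩
    exact ⟨hxQ, fun y hy => by have := hx y hy; simp [hl] at this; linarith⟩
  -- the truncated set T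
  set M : ℝ := degCLM s (fun _ : Fin s => (N:ℝ)) with hM
  set T : Set (Fin s → ℝ) := Q ∩ {x | degCLM s x ≤ M} with hT
  have hTsub : T ⊆ Set.pi Set.univ (fun _ : Fin s => Set.Icc (0:ℝ) M) := by
    rintro x ⟨⟨hx0, _⟩, hxM⟩ i _
    refine ⟨hx0 i, ?_⟩
    calc x i ≤ ∑ k, x k := Finset.single_le_sum (fun k _ => hx0 k) (Finset.mem_univ i)
    _ = degCLM s x := (degCLM_apply x).symm
    _ ≤ M := hxM
  have hTclosed : IsClosed T :=
    (CPset_closed C).inter (isClosed_le (degCLM s).continuous continuous_const)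
  have hTcompact : IsCompact T :=
    (isCompact_univ_pi fun _ => isCompact_Icc).of_isClosed_subset hTclosed hTsub
  have hTne : T.Nonempty := ⟨fun _ => (N:ℝ), hx₀, le_refl M⟩
  obtain ⟨p, hpT, hpmin⟩ := hTcompact.exists_isMinOn hTne ((degCLM s).continuous.continuousOn)
  have hpminQ : ∀ y ∈ Q, degCLM s p ≤ degCLM s y := by
    intro y hy
    by_cases h : degCLM s y ≤ M
    · exact hpmin ⟨hy, h⟩
    · exact le_trans (hpmin ⟨hx₀, le_refl M⟩) (by push_neg at h; linarith)
  have hpF : p ∈ F := ⟨hpT.1, fun y hy => by simp [hl]; exact hpminQ y hy⟩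
  have hFsubT : F ⊆ T := fun x hx =>
    ⟨(hFmin x hx).1, le_trans ((hFmin x hx).2 _ hx₀) (le_of_eq rfl)⟩
  have hFclosed : IsClosed F := by
    have : F = Q ∩ ⋂ y ∈ Q, {x | l y ≤ l x} := by
      ext x
      simp only [hF, ContinuousLinearMap.toExposed, Set.mem_inter_iff, Set.mem_iInter,
        Set.mem_setOf_eq]
    rw [this]
    exact (CPset_closed C).inter (isClosed_biInter fun y _ =>
      isClosed_le continuous_const l.continuous)
  have hFcompact : IsCompact F := hTcompact.of_isClosed_subset hFclosed hFsubT
  obtain ⟨v, hv⟩ := hFcompact.extremePoints_nonempty ⟨p, hpF⟩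
  have hvQ : v ∈ Set.extremePoints ℝ Q :=
    (ContinuousLinearMap.toExposed.isExposed (l := l) (A := Q)).isExtreme.extremePoints_subset_extremePoints hv
  have hvF : v ∈ F := hv.1
  obtain ⟨z, hz⟩ := hint v hvQ
  have hvmem : v ∈ Q := (hFmin v hvF).1
  have hz0 : ∀ i, 0 ≤ z i := by
    intro i
    have := hvmem.1 i
    rw [hz] at this
    simpa using this
  -- the integral point as a Finsupp
  set b : Fin s →₀ ℕ := Finsupp.equivFunOnFinite.symm (fun i => (z i).toNat) with hb
  have hbi : ∀ i, (b i : ℝ) = v i := by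
    intro i
    rw [hz]
    simp only [hb, Finsupp.equivFunOnFinite, Equiv.coe_fn_symm_mk]
    exact_mod_cast Int.toNat_of_nonneg (hz0 i)
  have hbmem : memCP C (fun i => (b i : ℚ) / 1) := by
    constructor
    · intro i; positivity
    · intro j
      have h := hvmem.2 j
      have : (1:ℝ) ≤ ∑ i, (b i : ℝ) * (C i j : ℝ) := by
        rw [show (∑ i, (b i : ℝ) * (C i j : ℝ)) = ∑ i, v i * (C i j : ℝ) from
          Finset.sum_congr rfl fun i _ => by rw [hbi]]
        exact h
      simp only [div_one]
      exact_mod_cast this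
  have halpha1 : alphaF K C 1 ≤ ∑ i, b i :=
    Nat.sInf_le ⟨b, mem_filtIdeal_of_memCP K C one_ne_zero b hbmem, rfl⟩
  have halpha1' : (alphaF K C 1 : ℝ) ≤ degCLM s v := by
    rw [degCLM_apply]
    calc (alphaF K C 1 : ℝ) ≤ ((∑ i, b i : ℕ) : ℝ) := by exact_mod_cast halpha1
    _ = ∑ i, (b i : ℝ) := by push_cast; rfl
    _ = ∑ i, v i := Finset.sum_congr rfl fun i _ => hbi i
  -- key inequality for every n
  have key : ∀ n : ℕ+, (alphaF K C 1 : ℝ) ≤ (alphaF K C (n:ℕ) : ℝ) / (n:ℕ) := by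
    intro n
    have hn : (n:ℕ) ≠ 0 := n.ne_zero
    -- the defining set of alphaF n is nonempty
    have hne : { d | ∃ a : Fin s →₀ ℕ,
        (monomial a 1 : MvPolynomial (Fin s) K) ∈ filtIdeal K C (n:ℕ) ∧ d = ∑ i, a i }.Nonempty := by
      set a : Fin s →₀ ℕ := Finsupp.equivFunOnFinite.symm (fun _ => (n:ℕ) * N) with ha
      have hamem : memCP C (fun i => (a i : ℚ) / (n:ℕ)) := by
        constructor
        · intro i; positivity
        · intro j
          have hn' : ((n:ℕ) : ℚ) ≠ 0 := by exact_mod_cast hn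
          have hai : ∀ i : Fin s, ((a i : ℚ)) / (n:ℕ) = (N:ℚ) := by
            intro i
            simp only [ha, Finsupp.equivFunOnFinite, Equiv.coe_fn_symm_mk]
            push_cast
            field_simp
            exact (Nat.cast_mul _ _ : ((((n:ℕ) * N : ℕ)) : ℚ) = _)
          rw [show (∑ i, (a i : ℚ) / (n:ℕ) * C i j) = ∑ i, (N:ℚ) * C i j from
            Finset.sum_congr rfl fun i _ => by rw [hai]]
          exact hN j
      exact ⟨∑ i, a i, a, mem_filtIdeal_of_memCP K C hn a hamem, rfl⟩
    obtain ⟨a, hamem, haeq⟩ := Nat.sInf_mem hne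
    obtain ⟨c, hca, hcmem⟩ := exists_le_of_mem_filtIdeal K C hn a hamem
    -- the rational point c/n lies in Q
    have hcQ : (fun i => (c i : ℝ) / (n:ℕ)) ∈ Q := by
      constructor
      · intro i; positivity
      · intro j
        have h := hcmem.2 j
        have : ((1:ℚ):ℝ) ≤ ((∑ i, (c i : ℚ) / (n:ℕ) * C i j : ℚ) : ℝ) := by exact_mod_cast h
        push_cast at this
        convert this using 2 with i
    have h1 : (alphaF K C 1 : ℝ) ≤ degCLM s (fun i => (c i : ℝ) / (n:ℕ)) :=
      le_trans halpha1' ((hFmin v hvF).2 _ hcQ)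
    have h2 : degCLM s (fun i => (c i : ℝ) / (n:ℕ)) ≤ (alphaF K C (n:ℕ) : ℝ) / (n:ℕ) := by
      have haeq' : alphaF K C (n:ℕ) = ∑ i, a i := haeq
      have hcsum : (∑ i, (c i : ℝ)) ≤ (alphaF K C (n:ℕ) : ℝ) := by
        rw [haeq']
        push_cast
        exact Finset.sum_le_sum fun i _ => by exact_mod_cast Finsupp.le_def.mp hca i
      have hnpos : (0:ℝ) < ((n:ℕ):ℝ) := by exact_mod_cast n.pos
      rw [degCLM_apply, ← Finset.sum_div]
      gcongr
    linarith
  exact le_antisymm (le_ciInf key) part1
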